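/- Let p, q ≥ 2 be integers and a, b odd integers with 0 < a < p, 0 < b < q. Define T(N) = 2^{2N} / ∏_{k=1}^{N} (16 sin²((2k-1)aπ/(2p)) sin²((2k-1)bπ/(2q))). Then lim_{N→∞} log|T(N)| / (2N)² = 0. -/

import Mathlib

open Real Finset Filter

set_option maxHeartbeats 1000000

lemma sin_ge_half (n : ℕ) (r : ℕ) (h1 : 1 ≤ r) (h2 : 2 * r ≤ n) :
    Real.sin (π / n) ≤ Real.sin (r * π / n) := by
  have hn0 : 0 < n := by omega
  have hn : 0 < (n : ℝ) := by exact_mod_cast hn0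
  have hr : (1 : ℝ) ≤ r := by exact_mod_cast h1
  have h2' : 2 * (r : ℝ) ≤ n := by exact_mod_cast h2
  have hpi := Real.pi_pos
  apply Real.sin_le_sin_of_le_of_le_pi_div_two
  · have : (0:ℝ) ≤ π / n := by positivity
    linarith
  · rw [div_le_div_iff₀ hn (by norm_num : (0:ℝ) < 2)]
    nlinarith
  · rw [div_le_div_iff₀ hn hn]
    nlinarith [mul_nonneg (mul_nonneg (sub_nonneg.2 hr) hpi.le) hn.le]

lemma sin_ge (n : ℕ) (r : ℕ) (h1 : 1 ≤ r) (h2 : r < n) :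
    Real.sin (π / n) ≤ Real.sin (r * π / n) := by
  rcases le_or_gt (2 * r) n with h | h
  · exact sin_ge_half n r h1 h
  · have hn : (0:ℝ) < n := by exact_mod_cast (by omega : 0 < n)
    have key := sin_ge_half n (n - r) (by omega) (by omega)
    have heq : ((n - r : ℕ) : ℝ) * π / n = π - r * π / n := by
      rw [Nat.cast_sub h2.le]
      field_simp
    rw [heq, Real.sin_pi_sub] at key
    exact key

lemma abs_sin_ge (p : ℕ) (hp : 2 ≤ p) (m : ℤ) (hm : Odd m) :
    Real.sin (π / (2 * p)) ≤ |Real.sin (m * π / (2 * p))| := by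
  set n : ℕ := 2 * p with hn
  have hn0 : 0 < n := by omega
  have hnR : (0:ℝ) < n := by exact_mod_cast hn0
  set k : ℤ := m / n with hk
  set r : ℤ := m % n with hr
  have hmr : r + (n:ℤ) * k = m := Int.emod_add_mul_ediv m n
  have hr0 : 0 ≤ r := Int.emod_nonneg m (by exact_mod_cast hn0.ne')
  have hrn : r < n := Int.emod_lt_of_pos m (by exact_mod_cast hn0)
  have h2pk : (n:ℤ) * k = 2 * ((p:ℤ) * k) := by push_cast [hn]; ring
  have hrodd : Odd r := by
    rcases hm with ⟨t, ht⟩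
    refine ⟨r / 2, by omega⟩
  have hr1 : 1 ≤ r := by rcases hrodd with ⟨t, ht⟩; omega
  have hcast : (2 * (p:ℝ)) = (n:ℝ) := by rw [hn]; push_cast; ring
  rw [hcast]
  have harg : (m : ℝ) * π / n = (r : ℝ) * π / n + k * π := by
    rw [← hmr]; push_cast; field_simp
  rw [harg, Real.sin_add_int_mul_pi, abs_mul]
  have h1 : |((-1 : ℝ)) ^ k| = 1 := by
    rcases Int.even_or_odd k with he | ho
    · rw [he.neg_one_zpow, abs_one]
    · rw [ho.neg_one_zpow, abs_neg, abs_one]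
  rw [h1, one_mul]
  have hsr : Real.sin (π / n) ≤ Real.sin ((r : ℝ) * π / n) := by
    have := sin_ge n r.toNat (by omega) (by omega)
    rwa [show ((r.toNat : ℕ) : ℝ) = (r:ℝ) by exact_mod_cast Int.toNat_of_nonneg hr0] at this
  have hnonneg : (0:ℝ) ≤ Real.sin ((r:ℝ) * π / n) := by
    have h0 : (0:ℝ) < Real.sin (π / n) := by
      apply Real.sin_pos_of_pos_of_lt_pi
      · positivity
      · rw [div_lt_iff₀ hnR]
        nlinarith [Real.pi_pos, show (4:ℝ) ≤ n by exact_mod_cast (by omega : 4 ≤ n)]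
    linarith
  rw [abs_of_nonneg hnonneg]
  exact hsr

theorem stmt_4 (p q : ℕ) (hp : 2 ≤ p) (hq : 2 ≤ q) (a b : ℤ)
    (ha : Odd a) (hb : Odd b) (ha0 : 0 < a) (hap : (a : ℤ) < p)
    (hb0 : 0 < b) (hbq : (b : ℤ) < q) :
    Filter.Tendsto
      (fun N : ℕ =>
        Real.log |(2 : ℝ) ^ (2 * N) /
          ∏ k ∈ Finset.Icc 1 N,
            (16 * Real.sin ((2 * (k : ℝ) - 1) * (a : ℝ) * Real.pi / (2 * (p : ℝ))) ^ 2 *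
              Real.sin ((2 * (k : ℝ) - 1) * (b : ℝ) * Real.pi / (2 * (q : ℝ))) ^ 2)| /
          (2 * (N : ℝ)) ^ 2)
      Filter.atTop (nhds 0) := by
  set f : ℕ → ℝ := fun k =>
    16 * Real.sin ((2 * (k : ℝ) - 1) * (a : ℝ) * π / (2 * (p : ℝ))) ^ 2 *
      Real.sin ((2 * (k : ℝ) - 1) * (b : ℝ) * π / (2 * (q : ℝ))) ^ 2 with hf
  have hpR : (0:ℝ) < p := by exact_mod_cast (by omega : 0 < p)
  have hqR : (0:ℝ) < q := by exact_mod_cast (by omega : 0 < q)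
  set sp : ℝ := Real.sin (π / (2 * p)) with hsp
  set sq : ℝ := Real.sin (π / (2 * q)) with hsq
  have hsp0 : 0 < sp := by
    apply Real.sin_pos_of_pos_of_lt_pi
    · positivity
    · rw [div_lt_iff₀ (by positivity)]
      have h2 : (2:ℝ) ≤ p := by exact_mod_cast hp
      nlinarith [Real.pi_pos]
  have hsq0 : 0 < sq := by
    apply Real.sin_pos_of_pos_of_lt_pi
    · positivity
    · rw [div_lt_iff₀ (by positivity)]
      have h2 : (2:ℝ) ≤ q := by exact_mod_cast hq
      nlinarith [Real.pi_pos]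
  set c : ℝ := 16 * sp ^ 2 * sq ^ 2 with hc
  have hc0 : 0 < c := by positivity
  -- pointwise bounds
  have hlow : ∀ k : ℕ, c ≤ f k := by
    intro k
    have hm1 : Odd ((2 * (k:ℤ) - 1) * a) := by
      rcases ha with ⟨t, ht⟩
      exact ⟨(2 * (k:ℤ) - 1) * t + (k:ℤ) - 1, by rw [ht]; ring⟩
    have hm2 : Odd ((2 * (k:ℤ) - 1) * b) := by
      rcases hb with ⟨t, ht⟩
      exact ⟨(2 * (k:ℤ) - 1) * t + (k:ℤ) - 1, by rw [ht]; ring⟩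
    have h1 := abs_sin_ge p hp ((2 * (k:ℤ) - 1) * a) hm1
    have h2 := abs_sin_ge q hq ((2 * (k:ℤ) - 1) * b) hm2
    have e1 : ((((2 * (k:ℤ) - 1) * a : ℤ)):ℝ) * π / (2 * p)
        = (2 * (k : ℝ) - 1) * (a : ℝ) * π / (2 * (p : ℝ)) := by push_cast; ring
    have e2 : ((((2 * (k:ℤ) - 1) * b : ℤ)):ℝ) * π / (2 * q)
        = (2 * (k : ℝ) - 1) * (b : ℝ) * π / (2 * (q : ℝ)) := by push_cast; ring
    rw [e1] at h1
    rw [e2] at h2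
    have hs1 : sp ^ 2 ≤ Real.sin ((2 * (k : ℝ) - 1) * (a : ℝ) * π / (2 * (p : ℝ))) ^ 2 :=
      calc sp ^ 2 ≤ |Real.sin ((2 * (k : ℝ) - 1) * (a : ℝ) * π / (2 * (p : ℝ)))| ^ 2 :=
            pow_le_pow_left₀ hsp0.le h1 2
      _ = Real.sin ((2 * (k : ℝ) - 1) * (a : ℝ) * π / (2 * (p : ℝ))) ^ 2 := sq_abs _
    have hs2 : sq ^ 2 ≤ Real.sin ((2 * (k : ℝ) - 1) * (b : ℝ) * π / (2 * (q : ℝ))) ^ 2 :=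
      calc sq ^ 2 ≤ |Real.sin ((2 * (k : ℝ) - 1) * (b : ℝ) * π / (2 * (q : ℝ)))| ^ 2 :=
            pow_le_pow_left₀ hsq0.le h2 2
      _ = Real.sin ((2 * (k : ℝ) - 1) * (b : ℝ) * π / (2 * (q : ℝ))) ^ 2 := sq_abs _
    calc c = 16 * sp ^ 2 * sq ^ 2 := hc
    _ ≤ 16 * Real.sin ((2 * (k : ℝ) - 1) * (a : ℝ) * π / (2 * (p : ℝ))) ^ 2 *
          Real.sin ((2 * (k : ℝ) - 1) * (b : ℝ) * π / (2 * (q : ℝ))) ^ 2 := by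
        apply mul_le_mul (by linarith) hs2 (by positivity) (by positivity)
    _ = f k := rfl
  have hhigh : ∀ k : ℕ, f k ≤ 16 := by
    intro k
    have h1 := Real.sin_sq_le_one ((2 * (k : ℝ) - 1) * (a : ℝ) * π / (2 * (p : ℝ)))
    have h2 := Real.sin_sq_le_one ((2 * (k : ℝ) - 1) * (b : ℝ) * π / (2 * (q : ℝ)))
    have key : f k ≤ 16 * 1 * 1 := by
      rw [hf]; dsimp only
      gcongr <;> first | norm_num | exact sq_nonneg _ | exact h1 | exact h2
    linarith
  set B : ℝ := Real.log 16 + |Real.log c| with hB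
  have hlogf : ∀ k : ℕ, |Real.log (f k)| ≤ B := by
    intro k
    have hfk : 0 < f k := lt_of_lt_of_le hc0 (hlow k)
    rw [abs_le]
    constructor
    · have h1 : Real.log c ≤ Real.log (f k) := Real.log_le_log hc0 (hlow k)
      have h2 : -|Real.log c| ≤ Real.log c := neg_abs_le _
      have h3 : (0:ℝ) ≤ Real.log 16 := Real.log_nonneg (by norm_num)
      rw [hB]; linarith
    · have h1 : Real.log (f k) ≤ Real.log 16 := Real.log_le_log hfk (hhigh k)
      have h3 : (0:ℝ) ≤ |Real.log c| := abs_nonneg _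
      rw [hB]; linarith
  -- main bound
  have key : ∀ N : ℕ, 1 ≤ N →
      abs (Real.log |(2 : ℝ) ^ (2 * N) / ∏ k ∈ Finset.Icc 1 N, f k|) ≤ (2 * Real.log 2 + B) * N := by
    intro N hN
    have hP : 0 < ∏ k ∈ Finset.Icc 1 N, f k :=
      Finset.prod_pos fun k _ => lt_of_lt_of_le hc0 (hlow k)
    have hT : 0 < (2 : ℝ) ^ (2 * N) / ∏ k ∈ Finset.Icc 1 N, f k :=
      div_pos (by positivity) hP
    rw [abs_of_pos hT, Real.log_div (pow_ne_zero _ two_ne_zero) hP.ne', Real.log_pow,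
      Real.log_prod (fun k _ => (lt_of_lt_of_le hc0 (hlow k)).ne')]
    have hsum : |∑ k ∈ Finset.Icc 1 N, Real.log (f k)| ≤ N * B := by
      calc |∑ k ∈ Finset.Icc 1 N, Real.log (f k)| ≤ ∑ k ∈ Finset.Icc 1 N, |Real.log (f k)| :=
            Finset.abs_sum_le_sum_abs _ _
      _ ≤ ∑ k ∈ Finset.Icc 1 N, B := Finset.sum_le_sum fun k _ => hlogf k
      _ = N * B := by rw [Finset.sum_const, Nat.card_Icc]; simp [nsmul_eq_mul]
    have h2N : ((2 * N : ℕ) : ℝ) = 2 * N := by push_cast; ring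
    have hlog2 : (0:ℝ) ≤ Real.log 2 := Real.log_nonneg (by norm_num)
    calc |↑(2 * N) * Real.log 2 - ∑ k ∈ Finset.Icc 1 N, Real.log (f k)|
        ≤ |↑(2 * N) * Real.log 2| + |∑ k ∈ Finset.Icc 1 N, Real.log (f k)| := abs_sub _ _
    _ ≤ 2 * N * Real.log 2 + N * B := by
        rw [h2N, abs_of_nonneg (by positivity)]
        linarith
    _ = (2 * Real.log 2 + B) * N := by ring
  -- squeeze
  have hB0 : 0 ≤ B := by
    rw [hB]
    have := Real.log_nonneg (show (1:ℝ) ≤ 16 by norm_num)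
    have := abs_nonneg (Real.log c)
    linarith
  apply squeeze_zero_norm' (a := fun N : ℕ => ((2 * Real.log 2 + B) / 4) / N)
  · filter_upwards [eventually_ge_atTop 1] with N hN
    have hNR : (0:ℝ) < N := by exact_mod_cast hN
    have hk := key N hN
    rw [Real.norm_eq_abs, abs_div, abs_of_nonneg (by positivity : (0:ℝ) ≤ (2 * (N:ℝ))^2)]
    rw [div_le_div_iff₀ (by positivity) hNR]
    have hlog2 : (0:ℝ) ≤ Real.log 2 := Real.log_nonneg (by norm_num)
    nlinarith [abs_nonneg (Real.log |(2 : ℝ) ^ (2 * N) / ∏ k ∈ Finset.Icc 1 N, f k|)]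
  · exact tendsto_const_div_atTop_nhds_zero_nat _
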